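/- Let R be a noncommutative unital ring, q a central element, and A, B, C ∈ R with AB = qBA, AC = qCA, and BC = qCB. Then for every n ≥ 0, (A + B + C)^n = ∑_{m=0}^{n} ∑_{k=0}^{m} [n; n−m, m−k, k]_q · C^{n−m} B^{m−k} A^{k}, where [n; a,b,c]_q denotes the q-trinomial coefficient [n]_q!/([a]_q![b]_q![c]_q!). -/
import Mathlib


/-- The Gaussian (q-)binomial coefficient [n choose k]_q in a ring R,
defined by the q-Pascal recurrence; for central q it agrees with
[n]_q!/([k]_q![n-k]_q!). -/
def gaussBinom {R : Type*} [Ring R] (q : R) : ℕ → ℕ → R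
  | _, 0 => 1
  | 0, _ + 1 => 0
  | n + 1, k + 1 => gaussBinom q n k + q ^ (k + 1) * gaussBinom q n (k + 1)

section aux
variable {R : Type*} [Ring R] (q : R)

lemma gaussBinom_comm (hq : ∀ x : R, q * x = x * q) :
    ∀ n k (x : R), gaussBinom q n k * x = x * gaussBinom q n k := by
  intro n
  induction n with
  | zero =>
    intro k x
    match k with
    | 0 => simp [gaussBinom]
    | k + 1 => simp [gaussBinom]
  | succ n ih =>
    intro k x
    match k with
    | 0 => simp [gaussBinom]
    | k + 1 =>
      have hqp : ∀ m (y : R), q ^ m * y = y * q ^ m := fun m y =>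
        (Commute.pow_left (hq y) m).eq
      simp only [gaussBinom, add_mul, mul_add, ih, mul_assoc]
      rw [← mul_assoc x (q ^ (k+1)), ← hqp (k+1) x, mul_assoc]

lemma gaussBinom_zero_of_lt : ∀ n k, n < k → gaussBinom q n k = 0 := by
  intro n
  induction n with
  | zero => intro k hk; match k, hk with
            | k + 1, _ => simp [gaussBinom]
  | succ n ih =>
    intro k hk
    match k, hk with
    | k + 1, hk =>
      have h1 : n < k := Nat.lt_of_succ_lt_succ hk
      simp [gaussBinom, ih k h1, ih (k+1) (Nat.lt_succ_of_lt h1)]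

lemma q_binom (X Y : R) (hq : ∀ x : R, q * x = x * q)
    (h : Y * X = q * (X * Y)) (n : ℕ) :
    (X + Y) ^ n = ∑ k ∈ Finset.range (n + 1),
      gaussBinom q n k * (X ^ k * Y ^ (n - k)) := by
  have hqp : ∀ m (y : R), q ^ m * y = y * q ^ m := fun m y =>
    (Commute.pow_left (hq y) m).eq
  have hYX : ∀ k, Y * X ^ k = q ^ k * (X ^ k * Y) := by
    intro k
    induction k with
    | zero => simp
    | succ k ih =>
      calc Y * X ^ (k+1) = q ^ k * (X ^ k * Y) * X := by
            rw [pow_succ, ← mul_assoc, ih]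
        _ = q ^ k * (X ^ k * (q * (X * Y))) := by rw [mul_assoc, mul_assoc, h]
        _ = q ^ k * (q * (X ^ k * (X * Y))) := by rw [← mul_assoc (X^k) q, ← hq, mul_assoc]
        _ = q ^ (k+1) * (X ^ (k+1) * Y) := by
            rw [← mul_assoc (q^k) q, ← pow_succ, ← mul_assoc (X^k) X, ← pow_succ]
  induction n with
  | zero => simp [gaussBinom]
  | succ n ih =>
    rw [pow_succ', ih, Finset.mul_sum]
    have expand : ∀ k ∈ Finset.range (n + 1),
        (X + Y) * (gaussBinom q n k * (X ^ k * Y ^ (n - k)))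
          = gaussBinom q n k * (X ^ (k+1) * Y ^ (n - k))
            + q ^ k * gaussBinom q n k * (X ^ k * Y ^ (n + 1 - k)) := by
      intro k hk
      have hk' : k ≤ n := Nat.lt_succ_iff.mp (Finset.mem_range.mp hk)
      have h1 : n + 1 - k = (n - k) + 1 := by omega
      have e1 : X * (gaussBinom q n k * (X ^ k * Y ^ (n - k)))
          = gaussBinom q n k * (X ^ (k+1) * Y ^ (n - k)) := by
        rw [← mul_assoc X, ← gaussBinom_comm q hq n k X, mul_assoc, ← mul_assoc X (X^k),
          ← pow_succ']
      have e2 : Y * (gaussBinom q n k * (X ^ k * Y ^ (n - k)))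
          = q ^ k * gaussBinom q n k * (X ^ k * Y ^ (n + 1 - k)) := by
        rw [← mul_assoc Y, ← gaussBinom_comm q hq n k Y, mul_assoc, ← mul_assoc Y (X^k),
          hYX k, h1, mul_assoc (q^k), mul_assoc (X^k), ← pow_succ',
          ← mul_assoc (gaussBinom q n k), gaussBinom_comm q hq n k (q^k)]
      rw [add_mul, e1, e2]
    rw [Finset.sum_congr rfl expand, Finset.sum_add_distrib]
    rw [Finset.sum_range_succ' (fun k => gaussBinom q (n+1) k * (X ^ k * Y ^ (n + 1 - k))) (n+1)]
    have hrec : ∀ k ∈ Finset.range (n + 1),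
        gaussBinom q (n+1) (k+1) * (X ^ (k+1) * Y ^ (n + 1 - (k+1)))
          = gaussBinom q n k * (X ^ (k+1) * Y ^ (n - k))
            + q ^ (k+1) * gaussBinom q n (k+1) * (X ^ (k+1) * Y ^ (n - k)) := by
      intro k hk
      have : n + 1 - (k + 1) = n - k := by omega
      rw [this, show (gaussBinom q (n+1) (k+1) : R)
        = gaussBinom q n k + q ^ (k + 1) * gaussBinom q n (k + 1) from rfl, add_mul]
    rw [Finset.sum_congr rfl hrec, Finset.sum_add_distrib]
    have lhs2 : ∑ k ∈ Finset.range (n + 1),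
        q ^ k * gaussBinom q n k * (X ^ k * Y ^ (n + 1 - k))
        = (∑ k ∈ Finset.range (n + 1),
            q ^ (k+1) * gaussBinom q n (k+1) * (X ^ (k+1) * Y ^ (n - k)))
          + gaussBinom q (n+1) 0 * (X ^ 0 * Y ^ (n + 1 - 0)) := by
      rw [Finset.sum_range_succ' (fun k => q ^ k * gaussBinom q n k * (X ^ k * Y ^ (n + 1 - k))) n]
      rw [Finset.sum_range_succ (fun k => q ^ (k+1) * gaussBinom q n (k+1) * (X ^ (k+1) * Y ^ (n - k))) n]
      rw [gaussBinom_zero_of_lt q n (n+1) (Nat.lt_succ_self n)]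
      simp only [mul_zero, zero_mul, add_zero]
      congr 1
      · apply Finset.sum_congr rfl
        intro k hk
        have : n + 1 - (k + 1) = n - k := by omega
        rw [this]
      · simp [gaussBinom]
    rw [lhs2]
    exact (add_assoc _ _ _).symm
end aux

/-- The q-trinomial coefficient [n; a, b, n-a-b]_q = [n]_q!/([a]_q![b]_q![n-a-b]_q!),
expressed via the standard factorization [n; a, b, c]_q = [n choose a]_q · [n-a choose b]_q. -/
def qTrinom {R : Type*} [Ring R] (q : R) (n a b : ℕ) : R :=
  gaussBinom q n a * gaussBinom q (n - a) b

/-- The q-trinomial theorem: if q is central and AB = qBA, AC = qCA, BC = qCB, then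
(A + B + C)^n = ∑_{m=0}^n ∑_{k=0}^m [n; n-m, m-k, k]_q · C^{n-m} B^{m-k} A^k. -/
theorem q_trinomial_theorem {R : Type*} [Ring R] (q A B C : R)
    (hq : ∀ x : R, q * x = x * q)
    (hAB : A * B = q * (B * A)) (hAC : A * C = q * (C * A))
    (hBC : B * C = q * (C * B)) (n : ℕ) :
    (A + B + C) ^ n =
      ∑ m ∈ Finset.range (n + 1), ∑ k ∈ Finset.range (m + 1),
        qTrinom q n (n - m) (m - k) * (C ^ (n - m) * (B ^ (m - k) * A ^ k)) := by
  have hABC : (A + B) * C = q * (C * (A + B)) := by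
    rw [add_mul, hAC, hBC, ← mul_add, ← mul_add]
  have hsplit : A + B + C = C + (A + B) := add_comm (A + B) C
  have main : (A + B + C) ^ n = ∑ a ∈ Finset.range (n + 1),
      ∑ j ∈ Finset.range (n - a + 1),
        (gaussBinom q n a * gaussBinom q (n - a) j) * (C ^ a * (B ^ j * A ^ (n - a - j))) := by
    rw [hsplit, q_binom q C (A + B) hq hABC n]
    apply Finset.sum_congr rfl
    intro a _
    rw [add_comm A B, q_binom q B A hq hAB (n - a)]
    simp only [Finset.mul_sum]
    apply Finset.sum_congr rfl
    intro j _
    rw [← mul_assoc (C ^ a), ← gaussBinom_comm q hq (n - a) j (C ^ a),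
      mul_assoc (gaussBinom q (n - a) j), ← mul_assoc (gaussBinom q n a)]
  rw [main]
  conv_lhs => rw [← Finset.sum_range_reflect]
  apply Finset.sum_congr rfl
  intro m hm
  have hm' : m ≤ n := Nat.lt_succ_iff.mp (Finset.mem_range.mp hm)
  have h1 : n + 1 - 1 - m = n - m := by omega
  have h2 : n - (n - m) = m := by omega
  rw [h1, h2]
  conv_lhs => rw [← Finset.sum_range_reflect]
  apply Finset.sum_congr rfl
  intro k hk
  have hk' : k ≤ m := Nat.lt_succ_iff.mp (Finset.mem_range.mp hk)
  have h3 : m + 1 - 1 - k = m - k := by omega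
  have h4 : m - (m - k) = k := by omega
  rw [h3, h4, qTrinom, h2]
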